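/- In the theory of a pair (stably embedded sorts): let M be a saturated structure, D a stably embedded (ind-)definable set, and e, e' ∈ M with tp(e/D(M)) = tp(e'/D(M)). Then there is an automorphism σ of M fixing D(M) pointwise with σ(e) = e'. Consequently, if e is fixed by every automorphism of M over D(M), then e ∈ dcl(D(M)). -/

import Mathlib

open FirstOrder Cardinal

namespace StablyEmbeddedAut

variable (L : FirstOrder.Language.{0, 0}) (M : Type) [L.Structure M]

/-- `a` and `b` (tuples from `M`) have the same type over the parameter set `A`. -/
def SameTypeOver (A : Set M) {n : ℕ} (a b : Fin n → M) : Prop :=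
  ∀ (m : ℕ) (c : Fin m → M), (∀ i, c i ∈ A) →
    ∀ φ : L.Formula (Fin n ⊕ Fin m),
      φ.Realize (Sum.elim a c) ↔ φ.Realize (Sum.elim b c)

/-- `M` is saturated (in its own cardinality): every finitely satisfiable set of
formulas in one free variable with parameters in a set of size `< #M` is realized. -/
def IsSaturatedStruct : Prop :=
  ∀ A : Set M, #A < #M →
    ∀ p : Set (Σ m : ℕ, L.Formula (Fin (m + 1)) × (Fin m → M)),
      (∀ q ∈ p, ∀ i, q.2.2 i ∈ A) →
      (∀ s : Finset (Σ m : ℕ, L.Formula (Fin (m + 1)) × (Fin m → M)), ↑s ⊆ p →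
        ∃ x : M, ∀ q ∈ s, q.2.1.Realize (Fin.cons x q.2.2)) →
      ∃ x : M, ∀ q ∈ p, q.2.1.Realize (Fin.cons x q.2.2)

/-- `D` is stably embedded (as a set of realizations of an (ind-)definable set):
for every tuple `a` there is a subset `E ⊆ D` of size at most `|L| + ℵ₀` such that
`tp(a/E) ⊢ tp(a/D)`. -/
def StablyEmbeddedSet (D : Set M) : Prop :=
  ∀ (n : ℕ) (a : Fin n → M), ∃ E : Set M, E ⊆ D ∧ #E ≤ ℵ₀ + L.card ∧
    ∀ b : Fin n → M, SameTypeOver L M E a b → SameTypeOver L M D a b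

/-- `e` is in the definable closure of `A`. -/
def InDcl (A : Set M) (e : M) : Prop :=
  ∃ (n : ℕ) (a : Fin n → M), (∀ i, a i ∈ A) ∧
    ∃ φ : L.Formula (Fin (n + 1)), φ.Realize (Fin.cons e a) ∧
      ∀ x : M, φ.Realize (Fin.cons x a) → x = e

set_option linter.unusedSectionVars false

variable {L M}

lemma ste_refl (A : Set M) {n : ℕ} (a : Fin n → M) : SameTypeOver L M A a a :=
  fun _ _ _ _ => Iff.rfl

lemma ste_symm {A : Set M} {n : ℕ} {a b : Fin n → M} (h : SameTypeOver L M A a b) :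
    SameTypeOver L M A b a := fun m c hc φ => (h m c hc φ).symm

lemma ste_comp {A : Set M} {n n' : ℕ} {a b : Fin n → M} (h : SameTypeOver L M A a b)
    (r : Fin n' → Fin n) : SameTypeOver L M A (a ∘ r) (b ∘ r) := by
  intro m c hc φ
  have := h m c hc (φ.relabel (Sum.map r id))
  simpa only [Language.Formula.realize_relabel, Sum.elim_comp_map, Function.comp_id] using this

lemma ste_congr {A : Set M} {n : ℕ} {a b a' b' : Fin n → M} (h : SameTypeOver L M A a b)
    (ha : ∀ i, a i = a' i) (hb : ∀ i, b i = b' i) : SameTypeOver L M A a' b' := by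
  have ha' : a = a' := funext ha
  have hb' : b = b' := funext hb
  rwa [ha', hb'] at h

/-- append parameters from `A` to both sides -/
lemma ste_append {A : Set M} {n k : ℕ} {a b : Fin n → M} (h : SameTypeOver L M A a b)
    (d : Fin k → M) (hd : ∀ i, d i ∈ A) :
    SameTypeOver L M A (Fin.append a d) (Fin.append b d) := by
  intro m c hc φ
  -- relabel: Fin (n+k) ⊕ Fin m → Fin n ⊕ Fin (k+m)
  set g : (Fin (n + k) ⊕ Fin m) → (Fin n ⊕ Fin (k + m)) :=
    Sum.elim (fun i => Fin.addCases (fun i₀ => Sum.inl i₀)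
      (fun i₁ => Sum.inr (Fin.castAdd m i₁)) i) (fun j => Sum.inr (Fin.natAdd k j)) with hg
  have hc' : ∀ i, Fin.append d c i ∈ A := by
    intro i
    refine Fin.addCases (fun i₀ => ?_) (fun i₁ => ?_) i
    · simpa using hd i₀
    · simpa using hc i₁
  have := h (k + m) (Fin.append d c) hc' (φ.relabel g)
  rw [Language.Formula.realize_relabel, Language.Formula.realize_relabel] at this
  convert this using 2 <;>
  · funext x
    rcases x with i | j
    · simp only [hg, Function.comp_apply, Sum.elim_inl]
      refine Fin.addCases (fun i₀ => ?_) (fun i₁ => ?_) i <;> simp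
    · simp [hg]


variable (L M) in
def Good (D : Set M) (Γ : Set (M × M)) : Prop :=
  ∀ (n : ℕ) (p : Fin n → M × M), (∀ i, p i ∈ Γ) →
    SameTypeOver L M D (fun i => (p i).1) (fun i => (p i).2)

lemma good_mono {D : Set M} {Γ Γ' : Set (M × M)} (h : Γ ⊆ Γ') (hG : Good L M D Γ') :
    Good L M D Γ := fun n p hp => hG n p (fun i => h (hp i))

lemma good_swap {D : Set M} {Γ : Set (M × M)} (hG : Good L M D Γ) :
    Good L M D (Prod.swap ⁻¹' Γ) := by
  intro n p hp
  exact ste_symm (hG n (fun i => (p i).swap) hp)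

open Classical in
lemma good_union_diag {D : Set M} {Γ : Set (M × M)} (hG : Good L M D Γ)
    (γ₀ : M × M) (hγ₀ : γ₀ ∈ Γ) {S : Set M} (hS : S ⊆ D) :
    Good L M D (Γ ∪ {q | q.1 = q.2 ∧ q.1 ∈ S}) := by
  intro n p hp
  by_cases hall : ∀ i, p i ∈ Γ
  · exact hG n p hall
  · push_neg at hall
    obtain ⟨i₀, hi₀⟩ := hall
    have hdiag : ∀ i, p i ∉ Γ → (p i).1 = (p i).2 ∧ (p i).1 ∈ S := by
      intro i hi
      rcases hp i with h | h
      · exact absurd h hi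
      · exact h
    have hs₀ : (p i₀).1 ∈ S := (hdiag i₀ hi₀).2
    set a : Fin n → M × M := fun i => if p i ∈ Γ then p i else γ₀ with ha
    set d : Fin n → M := fun i => if p i ∈ Γ then (p i₀).1 else (p i).1 with hd
    have hamem : ∀ i, a i ∈ Γ := by
      intro i; rw [ha]; dsimp only
      split
      · assumption
      · exact hγ₀
    have hdmem : ∀ i, d i ∈ D := by
      intro i; rw [hd]; dsimp only
      split
      · exact hS hs₀
      · exact hS (hdiag i (by assumption)).2
    have base := ste_append (hG n a hamem) d hdmem
    set r : Fin n → Fin (n + n) := fun i =>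
      if p i ∈ Γ then Fin.castAdd n i else Fin.natAdd n i with hr
    refine ste_congr (ste_comp base r) (fun i => ?_) (fun i => ?_)
    · by_cases h : p i ∈ Γ
      · simp only [Function.comp_apply, hr, if_pos h, Fin.append_left, ha, if_pos h]
      · simp only [Function.comp_apply, hr, if_neg h, Fin.append_right, hd, if_neg h]
    · by_cases h : p i ∈ Γ
      · simp only [Function.comp_apply, hr, if_pos h, Fin.append_left, ha, if_pos h]
      · simp only [Function.comp_apply, hr, if_neg h, Fin.append_right, hd, if_neg h]
        exact (hdiag i h).1


variable (L M) in
abbrev Fm := Σ k : ℕ, L.Formula (Fin (k + 1)) × (Fin k → M)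

def conjK : List (Fm L M) → ℕ
  | [] => 0
  | q :: t => q.1 + conjK t

def conjF : (l : List (Fm L M)) → L.Formula (Fin (conjK l + 1))
  | [] => ⊤
  | q :: t =>
    (q.2.1.relabel (Fin.cases 0 (fun i => (Fin.castAdd (conjK t) i).succ))) ⊓
      ((conjF t).relabel (Fin.cases 0 (fun i => (Fin.natAdd q.1 i).succ)))

def conjP : (l : List (Fm L M)) → ((q : Fm L M) → Fin q.1 → M) → Fin (conjK l) → M
  | [], _ => Fin.elim0
  | q :: t, f => Fin.append (f q) (conjP t f)

lemma conjP_mem {l : List (Fm L M)} {f₁ f₂ : (q : Fm L M) → Fin q.1 → M}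
    {Γ : Set (M × M)} (h : ∀ q ∈ l, ∀ i, (f₁ q i, f₂ q i) ∈ Γ) :
    ∀ i, (conjP l f₁ i, conjP l f₂ i) ∈ Γ := by
  induction l with
  | nil => exact fun i => i.elim0
  | cons q t ih =>
    intro i
    refine Fin.addCases (fun i₀ => ?_) (fun i₁ => ?_) i
    · simpa [conjP] using h q (by simp) i₀
    · simpa [conjP] using ih (fun q' hq' => h q' (by simp [hq'])) i₁

lemma conj_realize {l : List (Fm L M)} {f : (q : Fm L M) → Fin q.1 → M} {x : M} :
    (conjF l).Realize (Fin.cons x (conjP l f)) ↔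
      ∀ q ∈ l, q.2.1.Realize (Fin.cons x (f q)) := by
  induction l with
  | nil => simp [conjF]
  | cons q t ih =>
    simp only [conjF, Language.Formula.realize_inf, Language.Formula.realize_relabel,
      List.mem_cons, forall_eq_or_imp]
    constructor
    · rintro ⟨h1, h2⟩
      constructor
      · convert h1 using 1
        funext i
        refine Fin.cases rfl (fun j => (Fin.append_left (f q) (conjP t f) j).symm) i
      · rw [← ih]
        convert h2 using 1
        funext i
        refine Fin.cases rfl (fun j => (Fin.append_right (f q) (conjP t f) j).symm) i
    · rintro ⟨h1, h2⟩
      rw [← ih] at h2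
      constructor
      · convert h1 using 1
        funext i
        refine Fin.cases rfl (fun j => Fin.append_left (f q) (conjP t f) j) i
      · convert h2 using 1
        funext i
        refine Fin.cases rfl (fun j => Fin.append_right (f q) (conjP t f) j) i


variable (L M) in
/-- pack a formula φ(x, a-vars ; c-params) into a single-tuple formula -/
def pack (n m' : ℕ) : (Fin (n + 1) ⊕ Fin m') → Fin ((n + m') + 1) :=
  Sum.elim (Fin.cases 0 (fun i => (Fin.castAdd m' i).succ)) (fun j => (Fin.natAdd n j).succ)

lemma realize_pack {n m' : ℕ} {φ : L.Formula (Fin (n + 1) ⊕ Fin m')} {x : M}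
    {a : Fin n → M} {c : Fin m' → M} :
    (φ.relabel (pack n m')).Realize (Fin.cons x (Fin.append a c)) ↔
      φ.Realize (Sum.elim (Fin.cons x a) c) := by
  rw [Language.Formula.realize_relabel]
  apply iff_of_eq; congr 1
  funext i
  rcases i with i | j
  · refine Fin.cases ?_ (fun i₀ => ?_) i <;> simp [pack]
  · simp [pack]

/-- transfer an existential statement along SameTypeOver -/
lemma exists_transfer {D : Set M} {K : ℕ} {u v : Fin K → M}
    (h : SameTypeOver L M D u v) (χ : L.Formula (Fin (K + 1)))
    (hx : ∃ x, χ.Realize (Fin.cons x u)) : ∃ x, χ.Realize (Fin.cons x v) := by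
  classical
  set g : Fin (K + 1) → (Fin K ⊕ Fin 0) ⊕ Fin 1 :=
    Fin.cases (Sum.inr 0) (fun i => Sum.inl (Sum.inl i)) with hgdef
  set Φ : L.Formula (Fin K ⊕ Fin 0) :=
    ((Language.BoundedFormula.relabel g χ : L.BoundedFormula (Fin K ⊕ Fin 0) (1 + 0)).ex) with hΦ
  have key : ∀ w : Fin K → M,
      Φ.Realize (Sum.elim w Fin.elim0) ↔ ∃ x, χ.Realize (Fin.cons x w) := by
    intro w
    rw [hΦ, Language.Formula.Realize, Language.BoundedFormula.realize_ex]
    apply exists_congr; intro x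
    rw [Language.BoundedFormula.realize_relabel]
    apply iff_of_eq; congr 1
    · funext i
      refine Fin.cases ?_ (fun i₀ => ?_) i <;> simp [hgdef, Fin.snoc]
    · funext j; exact j.elim0
  exact (key v).mp ((h 0 Fin.elim0 (fun i => i.elim0) Φ).mp ((key u).mpr hx))

open Classical in
lemma forth {D : Set M} (hse : StablyEmbeddedSet L M D) (hsat : IsSaturatedStruct L M)
    (hcard : ℵ₀ + L.card < #M) {Γ : Set (M × M)} (hG : Good L M D Γ)
    {γ₀ : M × M} (hγ₀ : γ₀ ∈ Γ) (hΓc : #Γ < #M) (m : M) :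
    ∃ b, Good L M D (insert (m, b) Γ) := by
  have hM0 : ℵ₀ ≤ #M := le_of_lt (lt_of_le_of_lt (self_le_add_right _ _) hcard)
  set μ : Cardinal := #Γ + (ℵ₀ + L.card) with hμ
  have hμinf : ℵ₀ ≤ μ := le_trans (self_le_add_right _ _) (self_le_add_left _ _)
  have hμM : μ < #M := Cardinal.add_lt_of_lt hM0 hΓc hcard
  set A : Set M := insert m (Prod.fst '' Γ) with hA
  have hAcard : #A ≤ μ := by
    refine le_trans Cardinal.mk_insert_le ?_
    exact add_le_add Cardinal.mk_image_le
      (le_trans Cardinal.one_le_aleph0 (self_le_add_right _ _))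
  set Efun : (x : Σ n : ℕ, Fin n → M) → Set M := fun x => (hse x.1 x.2).choose with hEdef
  have hEfun : ∀ x : Σ n : ℕ, Fin n → M, Efun x ⊆ D ∧ #(Efun x) ≤ ℵ₀ + L.card ∧
      ∀ b, SameTypeOver L M (Efun x) x.2 b → SameTypeOver L M D x.2 b :=
    fun x => (hse x.1 x.2).choose_spec
  set T := {x : Σ n : ℕ, Fin n → M // ∀ i, x.2 i ∈ A} with hT
  set Estar : Set M := ⋃ x : T, Efun x.1 with hEstar
  have hTcard : #T ≤ μ := by
    have hinj : Function.Injective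
        (fun x : T => (⟨x.1.1, fun i => ⟨x.1.2 i, x.2 i⟩⟩ : Σ n : ℕ, Fin n → A)) := by
      rintro ⟨⟨n₁, t₁⟩, h₁⟩ ⟨⟨n₂, t₂⟩, h₂⟩ h
      simp only [Sigma.mk.inj_iff] at h
      obtain ⟨rfl, h⟩ := h
      have : t₁ = t₂ := by
        funext i
        exact congrArg Subtype.val (congrFun (eq_of_heq h) i)
      subst this
      rfl
    refine le_trans (Cardinal.mk_le_of_injective hinj) ?_
    rw [Cardinal.mk_sigma]
    refine le_trans (Cardinal.sum_le_sum _ (fun _ => μ) (fun n => ?_)) ?_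
    · have : #(Fin n → ↑A) = #A ^ (n : Cardinal) := by
        rw [← Cardinal.power_def, Cardinal.mk_fin]
      rw [this, Cardinal.power_natCast]
      exact le_trans (pow_le_pow_left' hAcard n) (Cardinal.power_nat_le hμinf)
    · rw [Cardinal.sum_const', Cardinal.mk_nat]
      rw [Cardinal.mul_eq_max le_rfl hμinf]
      exact max_le hμinf le_rfl
  have hEstarD : Estar ⊆ D := Set.iUnion_subset fun x => (hEfun x.1).1
  have hEstarc : #Estar < #M := by
    refine lt_of_le_of_lt (le_trans (Cardinal.mk_iUnion_le _) ?_) hμM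
    haveI : Nonempty T := ⟨⟨⟨0, Fin.elim0⟩, fun i => i.elim0⟩⟩
    have hsup : ⨆ x : T, #(Efun x.1) ≤ μ :=
      ciSup_le' fun x => le_trans (hEfun x.1).2.1 (self_le_add_left _ _)
    refine le_trans (mul_le_mul' hTcard hsup) ?_
    rw [Cardinal.mul_eq_self hμinf]
  set Γ' : Set (M × M) := Γ ∪ {q | q.1 = q.2 ∧ q.1 ∈ Estar} with hΓ'
  have hG' : Good L M D Γ' := good_union_diag hG γ₀ hγ₀ hEstarD
  set P : Set M := Prod.snd '' Γ ∪ Estar with hP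
  have hPc : #P < #M := by
    refine lt_of_le_of_lt (Cardinal.mk_union_le _ _) ?_
    exact Cardinal.add_lt_of_lt hM0 (lt_of_le_of_lt Cardinal.mk_image_le hΓc) hEstarc
  set p : Set (Fm L M) :=
    {q | ∃ c' : Fin q.1 → M, (∀ i, (c' i, q.2.2 i) ∈ Γ') ∧ q.2.1.Realize (Fin.cons m c')}
    with hp
  have hparams : ∀ q ∈ p, ∀ i, q.2.2 i ∈ P := by
    rintro q ⟨c', hc', -⟩ i
    rcases hc' i with h | h
    · exact Or.inl ⟨(c' i, q.2.2 i), h, rfl⟩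
    · have h1 : c' i = q.2.2 i := h.1
      exact Or.inr (h1 ▸ h.2)
  have hfinsat : ∀ s : Finset (Fm L M), ↑s ⊆ p →
      ∃ x, ∀ q ∈ s, q.2.1.Realize (Fin.cons x q.2.2) := by
    intro s hs
    set w : (q : Fm L M) → Fin q.1 → M :=
      fun q => if h : q ∈ p then h.choose else q.2.2 with hwdef
    have hw : ∀ q ∈ p, (∀ i, (w q i, q.2.2 i) ∈ Γ') ∧ q.2.1.Realize (Fin.cons m (w q)) := by
      intro q hq
      simp only [hwdef, dif_pos hq]
      exact ⟨hq.choose_spec.1, hq.choose_spec.2⟩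
    set l := s.toList with hl
    have hlp : ∀ q ∈ l, q ∈ p := fun q hq => hs (Finset.mem_toList.mp hq)
    have hreal : (conjF l).Realize (Fin.cons m (conjP l w)) :=
      conj_realize.mpr (fun q hq => (hw q (hlp q hq)).2)
    have hpairs : ∀ i, (conjP l w i, conjP l (fun q => q.2.2) i) ∈ Γ' :=
      conjP_mem (fun q hq i => (hw q (hlp q hq)).1 i)
    have hste : SameTypeOver L M D (conjP l w) (conjP l (fun q => q.2.2)) :=
      hG' (conjK l) (fun i => (conjP l w i, conjP l (fun q => q.2.2) i)) hpairs
    obtain ⟨x, hx⟩ := exists_transfer hste (conjF l) ⟨m, hreal⟩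
    exact ⟨x, fun q hq => conj_realize.mp hx q (Finset.mem_toList.mpr hq)⟩
  obtain ⟨b, hb⟩ := hsat P hPc p hparams hfinsat
  refine ⟨b, ?_⟩
  have hsub : ∀ (n : ℕ) (t : Fin (n + 1) → M), (∀ i, t i ∈ A) →
      Efun ⟨n + 1, t⟩ ⊆ Estar := by
    intro n t ht
    exact Set.subset_iUnion (fun x : T => Efun x.1) ⟨⟨n + 1, t⟩, ht⟩
  have master : ∀ (n : ℕ) (a : Fin n → M × M), (∀ i, a i ∈ Γ) →
      SameTypeOver L M D (Fin.cons m (fun i => (a i).1)) (Fin.cons b (fun i => (a i).2)) := by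
    intro n a ha
    set t : Fin (n + 1) → M := Fin.cons m (fun i => (a i).1) with ht
    have htA : ∀ i, t i ∈ A := by
      intro i
      refine Fin.cases ?_ (fun j => ?_) i
      · simp only [ht, Fin.cons_zero]; exact Set.mem_insert _ _
      · simp only [ht, Fin.cons_succ]
        exact Set.mem_insert_of_mem _ ⟨a j, ha j, rfl⟩
    apply (hEfun ⟨n + 1, t⟩).2.2
    intro m' c hc φ
    have hcE : ∀ j, c j ∈ Estar := fun j => hsub n t htA (hc j)
    have key : ∀ ψ : L.Formula (Fin (n + 1) ⊕ Fin m'), ψ.Realize (Sum.elim t c) →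
        ψ.Realize (Sum.elim (Fin.cons b (fun i => (a i).2)) c) := by
      intro ψ hψ
      set q : Fm L M := ⟨n + m', (ψ.relabel (pack n m'),
        Fin.append (fun i => (a i).2) c)⟩ with hq
      have hqp : q ∈ p := by
        refine ⟨Fin.append (fun i => (a i).1) c, fun i => ?_, ?_⟩
        · refine Fin.addCases (fun i₀ => ?_) (fun j => ?_) i
          · simp only [Fin.append_left]
            exact Or.inl (by simpa [q] using ha i₀)
          · simp only [Fin.append_right]
            exact Or.inr ⟨by simp [q], hcE j⟩
        · exact realize_pack.mpr hψ
      have := hb q hqp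
      exact realize_pack.mp this
    constructor
    · exact key φ
    · intro hR
      by_contra hL
      exact (Language.Formula.realize_not.mp
        (key φ.not (Language.Formula.realize_not.mpr hL))) hR
  intro n p' hp'
  set a : Fin n → M × M := fun i => if p' i ∈ Γ then p' i else γ₀ with ha'
  have ha : ∀ i, a i ∈ Γ := by
    intro i; simp only [ha']
    split
    · assumption
    · exact hγ₀
  have base := master n a ha
  set r : Fin n → Fin (n + 1) := fun i => if p' i ∈ Γ then i.succ else 0 with hr
  have hmb : ∀ i, p' i ∉ Γ → p' i = (m, b) := by
    intro i hi
    rcases Set.mem_insert_iff.mp (hp' i) with h | h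
    · exact h
    · exact absurd h hi
  refine ste_congr (ste_comp base r) (fun i => ?_) (fun i => ?_)
  · by_cases h : p' i ∈ Γ
    · simp only [Function.comp_apply, hr, if_pos h, Fin.cons_succ, ha', if_pos h]
    · simp only [Function.comp_apply, hr, if_neg h, Fin.cons_zero]
      rw [hmb i h]
  · by_cases h : p' i ∈ Γ
    · simp only [Function.comp_apply, hr, if_pos h, Fin.cons_succ, ha', if_pos h]
    · simp only [Function.comp_apply, hr, if_neg h, Fin.cons_zero]
      rw [hmb i h]

lemma back {D : Set M} (hse : StablyEmbeddedSet L M D) (hsat : IsSaturatedStruct L M)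
    (hcard : ℵ₀ + L.card < #M) {Γ : Set (M × M)} (hG : Good L M D Γ)
    {γ₀ : M × M} (hγ₀ : γ₀ ∈ Γ) (hΓc : #Γ < #M) (x : M) :
    ∃ b, Good L M D (insert (b, x) Γ) := by
  have hG' : Good L M D (Prod.swap ⁻¹' Γ) := good_swap hG
  have hγ' : γ₀.swap ∈ Prod.swap ⁻¹' Γ := by simp [hγ₀]
  have hc' : #(Prod.swap ⁻¹' Γ) < #M :=
    lt_of_le_of_lt (Cardinal.mk_preimage_of_injective _ _ Prod.swap_injective) hΓc
  obtain ⟨b, hb⟩ := forth hse hsat hcard hG' hγ' hc' x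
  refine ⟨b, ?_⟩
  have hset : Prod.swap ⁻¹' (insert (x, b) (Prod.swap ⁻¹' Γ)) = insert (b, x) Γ := by
    ext ⟨u, v⟩
    simp [Prod.ext_iff, and_comm]
  have := good_swap hb
  rwa [hset] at this

section Rec

variable (L M)
variable (D : Set M) (e e' : M) (r : M → M → Prop) (wf : WellFounded r)

open Classical in
noncomputable def pickF (Γ : Set (M × M)) (x : M) : M :=
  if h : ∃ b, Good L M D (insert (x, b) Γ) then h.choose else x

open Classical in
noncomputable def pickB (Γ : Set (M × M)) (x : M) : M :=
  if h : ∃ b, Good L M D (insert (b, x) Γ) then h.choose else x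

noncomputable def step : M → M × M :=
  wf.fix fun x IH =>
    let Γ : Set (M × M) := insert (e, e')
      {q | ∃ y, ∃ h : r y x, q = (y, (IH y h).1) ∨ q = ((IH y h).2, y)}
    (pickF L M D Γ x, pickB L M D (insert (x, pickF L M D Γ x) Γ) x)

noncomputable def stage (x : M) : Set (M × M) :=
  insert (e, e') {q | ∃ y, ∃ _ : r y x,
    q = (y, (step L M D e e' r wf y).1) ∨ q = ((step L M D e e' r wf y).2, y)}

lemma step_eq (x : M) : step L M D e e' r wf x =
    (pickF L M D (stage L M D e e' r wf x) x,
     pickB L M D (insert (x, pickF L M D (stage L M D e e' r wf x) x)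
       (stage L M D e e' r wf x)) x) :=
  wf.fix_eq _ x

noncomputable def delta (x : M) : Set (M × M) :=
  insert (x, (step L M D e e' r wf x).1)
    (insert ((step L M D e e' r wf x).2, x) (stage L M D e e' r wf x))

lemma stage_sub_delta (x : M) : stage L M D e e' r wf x ⊆ delta L M D e e' r wf x :=
  fun q hq => Set.mem_insert_of_mem _ (Set.mem_insert_of_mem _ hq)

lemma base_mem_stage (x : M) : (e, e') ∈ stage L M D e e' r wf x := Set.mem_insert _ _

lemma delta_sub_stage [IsTrans M r] {y x : M} (h : r y x) :
    delta L M D e e' r wf y ⊆ stage L M D e e' r wf x := by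
  intro q hq
  rcases Set.mem_insert_iff.mp hq with rfl | hq
  · exact Set.mem_insert_of_mem _ ⟨y, h, Or.inl rfl⟩
  rcases Set.mem_insert_iff.mp hq with rfl | hq
  · exact Set.mem_insert_of_mem _ ⟨y, h, Or.inr rfl⟩
  rcases Set.mem_insert_iff.mp hq with rfl | hq
  · exact Set.mem_insert _ _
  · obtain ⟨z, hz, hq⟩ := hq
    exact Set.mem_insert_of_mem _ ⟨z, _root_.trans hz h, hq⟩

end Rec

lemma exists_auto {D : Set M} (hse : StablyEmbeddedSet L M D) (hsat : IsSaturatedStruct L M)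
    (hcard : ℵ₀ + L.card < #M) {e e' : M} (htp : SameTypeOver L M D ![e] ![e']) :
    ∃ σ : L.Equiv M M, (∀ d ∈ D, σ d = d) ∧ σ e = e' := by
  classical
  have hM0 : ℵ₀ ≤ #M := le_of_lt (lt_of_le_of_lt (self_le_add_right _ _) hcard)
  obtain ⟨r, wo, hr⟩ := Cardinal.ord_eq M
  haveI := wo
  letI lin : LinearOrder M := IsWellOrder.linearOrder r
  set F := step L M D e e' r wo.wf with hF
  set Γof := stage L M D e e' r wo.wf with hΓof
  set Δ := delta L M D e e' r wo.wf with hΔ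
  have hbase : Good L M D {(e, e')} := by
    intro n p hp
    have h1 := ste_comp htp (fun _ : Fin n => (0 : Fin 1))
    refine ste_congr h1 (fun i => ?_) (fun i => ?_) <;>
    · have h2 := Set.mem_singleton_iff.mp (hp i)
      simp [h2]
  have hseg : ∀ x : M, #{y | r y x} < #M := by
    intro x
    have h1 := Cardinal.card_typein_lt (r := r) x hr
    exact h1
  have hchain : ∀ y z : M, r y z ∨ y = z → Δ y ⊆ Δ z := by
    intro y z h
    rcases h with h | rfl
    · exact (delta_sub_stage L M D e e' r wo.wf h).trans (stage_sub_delta L M D e e' r wo.wf z)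
    · exact subset_rfl
  have hle : ∀ y z : M, y ≤ z → r y z ∨ y = z := by
    intro y z h
    rcases lt_or_eq_of_le h with h | h
    · exact Or.inl h
    · exact Or.inr h
  have inv : ∀ x : M, Good L M D (Δ x) ∧ #(Δ x) < #M := by
    intro x
    induction x using WellFounded.induction wo.wf with
    | _ x IH =>
    have hsg : Good L M D (Γof x) := by
      intro n p hp
      by_cases hall : ∀ i, p i = (e, e')
      · exact hbase n p (fun i => by rw [hall i]; exact Set.mem_singleton _)
      · push_neg at hall
        obtain ⟨i₀, hi₀⟩ := hall
        have hsel : ∀ i, p i ≠ (e, e') → ∃ y, r y x ∧ p i ∈ Δ y := by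
          intro i hi
          rcases Set.mem_insert_iff.mp (hp i) with h | h
          · exact absurd h hi
          · obtain ⟨y, hy, h⟩ := h
            refine ⟨y, hy, ?_⟩
            rcases h with h | h
            · rw [h, hΔ]; exact Set.mem_insert _ _
            · rw [h, hΔ]; exact Set.mem_insert_of_mem _ (Set.mem_insert _ _)
        set y₀ := (hsel i₀ hi₀).choose with hy₀def
        have hy₀ : r y₀ x := (hsel i₀ hi₀).choose_spec.1
        set g : Fin n → M := fun i => if h : p i ≠ (e, e') then (hsel i h).choose else y₀
          with hgdef
        have hgx : ∀ i, r (g i) x := by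
          intro i
          simp only [hgdef]
          split
          · exact (hsel i ‹_›).choose_spec.1
          · exact hy₀
        have hne : (Finset.image g Finset.univ).Nonempty :=
          ⟨g i₀, Finset.mem_image_of_mem _ (Finset.mem_univ _)⟩
        set ystar := (Finset.image g Finset.univ).max' hne with hysdef
        have hystar : r ystar x := by
          obtain ⟨j, -, hj⟩ := Finset.mem_image.mp ((Finset.image g Finset.univ).max'_mem hne)
          rw [hysdef, ← hj]
          exact hgx j
        have hmem : ∀ i, p i ∈ Δ ystar := by
          intro i
          have hsub : Δ (g i) ⊆ Δ ystar :=
            hchain _ _ (hle _ _ (Finset.le_max' _ _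
              (Finset.mem_image_of_mem _ (Finset.mem_univ _))))
          by_cases hi : p i ≠ (e, e')
          · refine hsub ?_
            simp only [hgdef]
            rw [dif_pos hi]
            exact (hsel i hi).choose_spec.2
          · push_neg at hi
            rw [hi]
            exact stage_sub_delta L M D e e' r wo.wf ystar
              (base_mem_stage L M D e e' r wo.wf ystar)
        exact (IH ystar hystar).1 n p hmem
    have hsc : #(Γof x) < #M := by
      have hsub : Γof x ⊆ Set.range (fun o : Option ({y // r y x} × Bool) =>
          Option.elim o (e, e') (fun z =>
            if z.2 then ((F z.1.1).2, z.1.1) else (z.1.1, (F z.1.1).1))) := by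
        rintro q hq
        rcases Set.mem_insert_iff.mp hq with rfl | ⟨y, hy, h⟩
        · exact ⟨none, rfl⟩
        rcases h with rfl | rfl
        · exact ⟨some (⟨y, hy⟩, false), rfl⟩
        · exact ⟨some (⟨y, hy⟩, true), rfl⟩
      refine lt_of_le_of_lt (le_trans (Cardinal.mk_le_mk_of_subset hsub)
        Cardinal.mk_range_le) ?_
      have h2 : #(Option ({y // r y x} × Bool)) = #{y // r y x} * 2 + 1 := by
        simp [Cardinal.mk_option, Cardinal.mk_prod]
      rw [h2]
      refine Cardinal.add_lt_of_lt hM0 (Cardinal.mul_lt_of_lt hM0 (hseg x) ?_) ?_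
      · exact lt_of_lt_of_le (by simpa using Cardinal.nat_lt_aleph0 2) hM0
      · exact lt_of_lt_of_le Cardinal.one_lt_aleph0 hM0
    have hbm := base_mem_stage L M D e e' r wo.wf x
    have hexF := forth hse hsat hcard hsg hbm hsc x
    have hu : Good L M D (insert (x, pickF L M D (Γof x) x) (Γof x)) := by
      simp only [pickF]
      rw [dif_pos hexF]
      exact hexF.choose_spec
    have hc2 : #(insert (x, pickF L M D (Γof x) x) (Γof x) : Set (M × M)) < #M :=
      lt_of_le_of_lt Cardinal.mk_insert_le
        (Cardinal.add_lt_of_lt hM0 hsc (lt_of_lt_of_le Cardinal.one_lt_aleph0 hM0))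
    have hexB := back hse hsat hcard hu (Set.mem_insert_of_mem _ hbm) hc2 x
    have hv : Good L M D (insert (pickB L M D (insert (x, pickF L M D (Γof x) x) (Γof x)) x, x)
        (insert (x, pickF L M D (Γof x) x) (Γof x))) := by
      simp only [pickB]
      rw [dif_pos hexB]
      exact hexB.choose_spec
    have hΔeq : Δ x = insert (pickB L M D (insert (x, pickF L M D (Γof x) x) (Γof x)) x, x)
        (insert (x, pickF L M D (Γof x) x) (Γof x)) := by
      rw [hΔ, delta, step_eq]
      rw [Set.insert_comm]
    constructor
    · rw [hΔeq]; exact hv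
    · rw [hΔeq]
      refine lt_of_le_of_lt Cardinal.mk_insert_le (Cardinal.add_lt_of_lt hM0 hc2
        (lt_of_lt_of_le Cardinal.one_lt_aleph0 hM0))
  -- the global graph
  set Γinf : Set (M × M) := ⋃ x, Δ x with hΓinf
  have hGinf : Good L M D Γinf := by
    intro n p hp
    have hsel : ∀ i, ∃ y, p i ∈ Δ y := fun i => Set.mem_iUnion.mp (hp i)
    by_cases hn : n = 0
    · subst hn
      rw [show (fun i : Fin 0 => (p i).1) = (fun i => (p i).2) from funext fun i => i.elim0]
      exact ste_refl _ _
    · obtain ⟨i₀⟩ : Nonempty (Fin n) := ⟨⟨0, Nat.pos_of_ne_zero hn⟩⟩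
      set g : Fin n → M := fun i => (hsel i).choose with hgdef
      have hne : (Finset.image g Finset.univ).Nonempty :=
        ⟨g i₀, Finset.mem_image_of_mem _ (Finset.mem_univ _)⟩
      set ystar := (Finset.image g Finset.univ).max' hne with hysdef
      have hmem : ∀ i, p i ∈ Δ ystar := by
        intro i
        have hsub : Δ (g i) ⊆ Δ ystar :=
          hchain _ _ (hle _ _ (Finset.le_max' _ (g i)
            (Finset.mem_image_of_mem g (Finset.mem_univ i))))
        exact hsub (hsel i).choose_spec
      exact (inv ystar).1 n p hmem
  have memf : ∀ x : M, (x, (F x).1) ∈ Γinf :=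
    fun x => Set.mem_iUnion.mpr ⟨x, Set.mem_insert _ _⟩
  have memb : ∀ x : M, ((F x).2, x) ∈ Γinf :=
    fun x => Set.mem_iUnion.mpr ⟨x, Set.mem_insert_of_mem _ (Set.mem_insert _ _)⟩
  have meme : (e, e') ∈ Γinf :=
    Set.mem_iUnion.mpr ⟨e, stage_sub_delta L M D e e' r wo.wf e
      (base_mem_stage L M D e e' r wo.wf e)⟩
  have hfun : ∀ q₁ q₂ : M × M, q₁ ∈ Γinf → q₂ ∈ Γinf → (q₁.1 = q₂.1 ↔ q₁.2 = q₂.2) := by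
    intro q₁ q₂ h1 h2
    have hst := hGinf 2 ![q₁, q₂] (by
      intro i; fin_cases i <;> assumption)
    have := hst 0 Fin.elim0 (fun i => i.elim0)
      (Language.Term.equal (Language.Term.var (Sum.inl 0)) (Language.Term.var (Sum.inl 1)))
    simpa using this
  set g1 : M → M := fun x => (F x).1 with hg1
  set g2 : M → M := fun x => (F x).2 with hg2
  have hli : Function.LeftInverse g2 g1 := by
    intro x
    exact (hfun ((g2 (g1 x)), g1 x) (x, g1 x) (memb (g1 x)) (memf x)).mpr rfl
  have hri : Function.RightInverse g2 g1 := by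
    intro x
    exact (hfun (g2 x, g1 (g2 x)) (g2 x, x) (memf (g2 x)) (memb x)).mp rfl
  have hmapfun : ∀ {k : ℕ} (f : L.Functions k) (v : Fin k → M),
      g1 (Language.Structure.funMap f v) = Language.Structure.funMap f (g1 ∘ v) := by
    intro k f v
    have hst := hGinf (k + 1)
      (Fin.cons (Language.Structure.funMap f v, g1 (Language.Structure.funMap f v))
        (fun i => (v i, g1 (v i)))) (by
      intro i
      refine Fin.cases ?_ (fun j => ?_) i
      · simpa using memf _
      · simpa using memf _)
    have := hst 0 Fin.elim0 (fun i => i.elim0)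
      (Language.Term.equal
        (Language.Term.func f (fun i => Language.Term.var (Sum.inl i.succ)))
        (Language.Term.var (Sum.inl 0)))
    have h2 : (Language.Structure.funMap f fun i => g1 (v i)) =
        g1 (Language.Structure.funMap f v) := by simpa using this
    exact h2.symm
  have hmaprel : ∀ {k : ℕ} (R : L.Relations k) (v : Fin k → M),
      Language.Structure.RelMap R (g1 ∘ v) ↔ Language.Structure.RelMap R v := by
    intro k R v
    have hst := hGinf k (fun i => (v i, g1 (v i))) (fun i => memf _)
    have := hst 0 Fin.elim0 (fun i => i.elim0)
      (Language.Relations.formula R (fun i => Language.Term.var (Sum.inl i)))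
    have h2 : Language.Structure.RelMap R v ↔
        Language.Structure.RelMap R (fun i => g1 (v i)) := by simpa using this
    exact h2.symm
  refine ⟨⟨⟨g1, g2, hli, hri⟩, hmapfun, hmaprel⟩, ?_, ?_⟩
  · intro d hd
    show g1 d = d
    have hst := hGinf 1 ![(d, g1 d)] (by intro i; fin_cases i; exact memf d)
    have := hst 1 ![d] (by intro i; fin_cases i; exact hd)
      (Language.Term.equal (Language.Term.var (Sum.inl 0)) (Language.Term.var (Sum.inr 0)))
    simpa using this
  · show g1 e = e'
    exact (hfun (e, g1 e) (e, e') (memf e) meme).mp rfl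

variable (L M) in
theorem aut_over_stably_embedded (D : Set M) (hse : StablyEmbeddedSet L M D)
    (hsat : IsSaturatedStruct L M) (hcard : ℵ₀ + L.card < #M)
    (e e' : M) (htp : SameTypeOver L M D ![e] ![e']) :
    (∃ σ : L.Equiv M M, (∀ d ∈ D, σ d = d) ∧ σ e = e') ∧
    ((∀ σ : L.Equiv M M, (∀ d ∈ D, σ d = d) → σ e = e) → InDcl L M D e) := by
  classical
  have hM0 : ℵ₀ ≤ #M := le_of_lt (lt_of_le_of_lt (self_le_add_right _ _) hcard)
  refine ⟨exists_auto hse hsat hcard htp, ?_⟩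
  intro hfix
  have huniq : ∀ b : M, SameTypeOver L M D ![e] ![b] → b = e := by
    intro b hb
    obtain ⟨σ, hσD, hσe⟩ := exists_auto hse hsat hcard hb
    rw [← hσe, hfix σ hσD]
  obtain ⟨E, hED, hEc, hEup⟩ := hse 1 ![e]
  by_contra hnot
  set A : Set M := insert e E with hA
  have hAc : #A < #M := lt_of_le_of_lt Cardinal.mk_insert_le
    (Cardinal.add_lt_of_lt hM0 (lt_of_le_of_lt hEc hcard)
      (lt_of_lt_of_le Cardinal.one_lt_aleph0 hM0))
  set neq : Fm L M := ⟨1, (((Language.Term.var (0 : Fin 2)).equal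
    (Language.Term.var (1 : Fin 2))).not, ![e])⟩ with hneq
  set p₀ : Set (Fm L M) :=
    {q | (∀ i, q.2.2 i ∈ E) ∧ q.2.1.Realize (Fin.cons e q.2.2)} with hp₀
  set p : Set (Fm L M) := insert neq p₀ with hp
  have hparams : ∀ q ∈ p, ∀ i, q.2.2 i ∈ A := by
    intro q hq i
    rcases Set.mem_insert_iff.mp hq with rfl | hq
    · fin_cases i
      simp only [hneq, Matrix.cons_val_zero, Matrix.cons_val_fin_one]
      exact Set.mem_insert _ _
    · exact Set.mem_insert_of_mem _ (hq.1 i)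
  have hfin : ∀ s : Finset (Fm L M), ↑s ⊆ p →
      ∃ x, ∀ q ∈ s, q.2.1.Realize (Fin.cons x q.2.2) := by
    intro s hs
    set l : List (Fm L M) := s.toList.filter (fun q => q ∈ p₀) with hl
    have hlmem : ∀ q ∈ l, q ∈ p₀ := by
      intro q hq
      simpa using (List.mem_filter.mp hq).2
    have hereal : (conjF l).Realize (Fin.cons e (conjP l (fun q => q.2.2))) :=
      conj_realize.mpr (fun q hq => (hlmem q hq).2)
    have hparE : ∀ i, conjP l (fun q => q.2.2) i ∈ E := by
      have := conjP_mem (l := l) (f₁ := fun q => q.2.2) (f₂ := fun q => q.2.2)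
        (Γ := {z : M × M | z.1 ∈ E}) (fun q hq i => (hlmem q hq).1 i)
      exact fun i => this i
    by_cases hone : ∀ x : M, (conjF l).Realize (Fin.cons x (conjP l (fun q => q.2.2))) → x = e
    · exact absurd ⟨conjK l, conjP l (fun q => q.2.2), fun i => hED (hparE i),
        conjF l, hereal, hone⟩ hnot
    · push_neg at hone
      obtain ⟨x, hx1, hx2⟩ := hone
      refine ⟨x, fun q hq => ?_⟩
      rcases Set.mem_insert_iff.mp (hs hq) with rfl | hq'
      · simpa [neq] using hx2
      · have hql : q ∈ l := by
          rw [hl]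
          refine List.mem_filter.mpr ⟨Finset.mem_toList.mpr hq, by simpa using hq'⟩
        exact conj_realize.mp hx1 q hql
  obtain ⟨b, hb⟩ := hsat A hAc p hparams hfin
  have hbne : b ≠ e := by
    have := hb neq (Set.mem_insert _ _)
    simpa [neq] using this
  have hv1 : ∀ (m' : ℕ) (c : Fin m' → M) (z : M),
      (Sum.elim (![z] : Fin 1 → M) c) = (Sum.elim (Fin.cons z Fin.elim0) c) := by
    intro m' c z
    funext w
    rcases w with i | j
    · refine Fin.cases ?_ (fun j => j.elim0) i
      rfl
    · rfl
  have hbtp : SameTypeOver L M E ![e] ![b] := by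
    intro m' c hc φ
    have hkey : ∀ ψ : L.Formula (Fin 1 ⊕ Fin m'), ψ.Realize (Sum.elim ![e] c) →
        ψ.Realize (Sum.elim ![b] c) := by
      intro ψ hψ
      set q : Fm L M := ⟨0 + m', (ψ.relabel (pack 0 m'), Fin.append Fin.elim0 c)⟩ with hq
      have hqp : q ∈ p := by
        refine Set.mem_insert_of_mem _ ⟨fun i => ?_, ?_⟩
        · refine Fin.addCases (fun i₀ => i₀.elim0) (fun j => ?_) i
          simpa [q] using hc j
        · rw [hv1 m' c e] at hψ
          exact realize_pack.mpr hψ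
      have h2 := (realize_pack (a := Fin.elim0)).mp (hb q hqp)
      rwa [← hv1 m' c b] at h2
    constructor
    · exact hkey φ
    · intro hR
      by_contra hL
      exact (Language.Formula.realize_not.mp
        (hkey φ.not (Language.Formula.realize_not.mpr hL))) hR
  exact hbne (huniq b (hEup ![b] hbtp))

end StablyEmbeddedAut
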